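/- Let σ : ℝ → (0,∞) be C¹ with σ' ≥ 0, and let w ∈ C¹(ℝ) be such that σ w² → 0 as x → ±∞ and the integrals ∫ σ w², ∫ σ (w')² are finite. Then sup_{x∈ℝ} σ(x) w(x)² ≤ 2 (∫_ℝ σ w²)^{1/2} (∫_ℝ σ (w')²)^{1/2}. -/

import Mathlib

open MeasureTheory Filter Real

theorem weighted_agmon_inequality (σ w : ℝ → ℝ)
    (hσ : ContDiff ℝ 1 σ) (hσpos : ∀ x, 0 < σ x)
    (hσ' : ∀ x, 0 ≤ deriv σ x) (hw : ContDiff ℝ 1 w)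
    (hlimTop : Filter.Tendsto (fun x => σ x * w x ^ 2) Filter.atTop (nhds 0))
    (hlimBot : Filter.Tendsto (fun x => σ x * w x ^ 2) Filter.atBot (nhds 0))
    (hi1 : MeasureTheory.Integrable (fun x => σ x * w x ^ 2))
    (hi2 : MeasureTheory.Integrable (fun x => σ x * (deriv w x) ^ 2)) :
    ∀ x : ℝ, σ x * w x ^ 2 ≤
      2 * Real.sqrt (∫ y : ℝ, σ y * w y ^ 2) *
        Real.sqrt (∫ y : ℝ, σ y * (deriv w y) ^ 2) := by
  intro x
  set A := ∫ y : ℝ, σ y * w y ^ 2 with hAdef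
  set B := ∫ y : ℝ, σ y * (deriv w y) ^ 2 with hBdef
  have hA0 : 0 ≤ A := integral_nonneg fun y => mul_nonneg (hσpos y).le (sq_nonneg _)
  have hB0 : 0 ≤ B := integral_nonneg fun y => mul_nonneg (hσpos y).le (sq_nonneg _)
  set f : ℝ → ℝ := fun y => σ y * w y ^ 2 with hfdef
  have hσd : ∀ y, HasDerivAt σ (deriv σ y) y := fun y =>
    (hσ.differentiable one_ne_zero y).hasDerivAt
  have hwd : ∀ y, HasDerivAt w (deriv w y) y := fun y =>
    (hw.differentiable one_ne_zero y).hasDerivAt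
  have hfD : ∀ y, HasDerivAt f (deriv σ y * w y ^ 2 + σ y * (2 * w y * deriv w y)) y := by
    intro y
    have : HasDerivAt f _ y := (hσd y).mul ((hwd y).pow 2)
    simpa [pow_one, mul_comm, mul_assoc, mul_left_comm] using this
  have hfC : ContDiff ℝ 1 f := hσ.mul (hw.pow 2)
  have hderivfC : Continuous (deriv f) := hfC.continuous_deriv le_rfl
  have key : ∀ t : ℝ, 0 < t → f x ≤ t * A + B / t := by
    intro t ht
    set h : ℝ → ℝ := fun y => t * (σ y * w y ^ 2) + (1 / t) * (σ y * (deriv w y) ^ 2)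
      with hh
    have hhint : Integrable h := (hi1.const_mul t).add (hi2.const_mul (1 / t))
    have hhnn : ∀ y, 0 ≤ h y := by
      intro y
      have h1 : 0 ≤ σ y * w y ^ 2 := mul_nonneg (hσpos y).le (sq_nonneg _)
      have h2 : 0 ≤ σ y * (deriv w y) ^ 2 := mul_nonneg (hσpos y).le (sq_nonneg _)
      have := ht.le
      positivity
    have hIh : ∫ y, h y = t * A + B / t := by
      rw [hh, integral_add (hi1.const_mul t) (hi2.const_mul (1 / t)),
        integral_const_mul, integral_const_mul]
      show t * A + 1 / t * B = t * A + B / t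
      ring
    have hdf : ∀ y, -h y ≤ deriv f y := by
      intro y
      show -(t * (σ y * w y ^ 2) + 1 / t * (σ y * (deriv w y) ^ 2)) ≤ deriv f y
      rw [(hfD y).deriv]
      have h1 := (hσpos y).le
      have h4 : 0 ≤ (deriv σ y) * w y ^ 2 := mul_nonneg (hσ' y) (sq_nonneg _)
      have hy : h y = t * (σ y * w y ^ 2) + 1 / t * (σ y * (deriv w y) ^ 2) := rfl
      have expand : t * (σ y * w y ^ 2) + 1 / t * (σ y * (deriv w y) ^ 2) +
          (deriv σ y * w y ^ 2 + σ y * (2 * w y * deriv w y)) =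
          deriv σ y * w y ^ 2 + (σ y / t) * (t * w y + deriv w y) ^ 2 := by
        field_simp
        ring
      have hnn : 0 ≤ (σ y / t) * (t * w y + deriv w y) ^ 2 :=
        mul_nonneg (div_nonneg h1 ht.le) (sq_nonneg _)
      linarith
    have step : ∀ T, x ≤ T → f x ≤ f T + ∫ y, h y := by
      intro T hT
      have hFTC : ∫ y in x..T, deriv f y = f T - f x :=
        intervalIntegral.integral_deriv_eq_sub
          (fun y _ => ((hfD y).differentiableAt))
          (hderivfC.intervalIntegrable x T)
      have hmono : ∫ y in x..T, (-h y) ≤ ∫ y in x..T, deriv f y :=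
        intervalIntegral.integral_mono_on hT hhint.neg.intervalIntegrable
          (hderivfC.intervalIntegrable x T) (fun y _ => hdf y)
      have hneg : ∫ y in x..T, (-h y) = -∫ y in x..T, h y := by
        simp [intervalIntegral.integral_neg]
      have hset : ∫ y in x..T, h y ≤ ∫ y, h y := by
        rw [intervalIntegral.integral_of_le hT]
        exact setIntegral_le_integral hhint (Filter.Eventually.of_forall hhnn)
      rw [hneg] at hmono
      linarith [hFTC ▸ hmono]
    have hle0 : f x - ∫ y, h y ≤ 0 := by
      refine ge_of_tendsto hlimTop ?_
      filter_upwards [eventually_ge_atTop x] with T hT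
      linarith [step T hT]
    rw [hIh] at hle0
    linarith
  -- optimize over t
  set a := Real.sqrt A with hadef
  set b := Real.sqrt B with hbdef
  have ha0 : 0 ≤ a := Real.sqrt_nonneg _
  have hb0 : 0 ≤ b := Real.sqrt_nonneg _
  have haA : a ^ 2 = A := Real.sq_sqrt hA0
  have hbB : b ^ 2 = B := Real.sq_sqrt hB0
  have main : ∀ ε : ℝ, 0 < ε → f x ≤ 2 * a * b + ε * (a + b) := by
    intro ε hε
    have hae : 0 < a + ε := by linarith
    have hbe : 0 < b + ε := by linarith
    have ht : 0 < (b + ε) / (a + ε) := div_pos hbe hae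
    have hk := key _ ht
    have h1 : (b + ε) / (a + ε) * A ≤ a * b + a * ε := by
      rw [← haA, div_mul_eq_mul_div, div_le_iff₀ hae]
      nlinarith [mul_nonneg (mul_nonneg ha0 hb0) hε.le, mul_nonneg ha0 (sq_nonneg ε)]
    have h2 : B / ((b + ε) / (a + ε)) ≤ a * b + b * ε := by
      rw [← hbB, div_div_eq_mul_div, div_le_iff₀ hbe]
      nlinarith [mul_nonneg (mul_nonneg ha0 hb0) hε.le, mul_nonneg hb0 (sq_nonneg ε)]
    linarith
  have final : f x ≤ 2 * a * b := by
    refine le_of_forall_pos_le_add ?_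
    intro ε hε
    have hd : 0 < ε / (a + b + 1) := div_pos hε (by linarith)
    have := main _ hd
    have hbound : ε / (a + b + 1) * (a + b) ≤ ε := by
      rw [div_mul_eq_mul_div, div_le_iff₀ (by linarith : (0:ℝ) < a + b + 1)]
      nlinarith
    linarith
  simpa [hadef, hbdef] using final
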